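/- For natural numbers k < n, every maximal chain of the poset P_{k,n} has exactly k+n elements (so the rank of P_{k,n}, the common length of its maximal chains, is k+n−1). -/

import Mathlib

/-- The poset `P_{k,n}`: pairs `(l,m)` of naturals with `l ≤ k` and `l < m ≤ n`,
ordered componentwise (which is the product order on `ℕ × ℕ`). -/
def Pkn (k n : ℕ) : Set (ℕ × ℕ) := {q | q.1 ≤ k ∧ q.1 < q.2 ∧ q.2 ≤ n}

/-- `C` is a maximal chain of the subposet of `ℕ × ℕ` (with the componentwise
order) on the set `V`: a chain contained in `V` not properly contained in any
chain contained in `V`. -/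
def IsMaxChainIn (V C : Set (ℕ × ℕ)) : Prop :=
  C ⊆ V ∧ IsChain (· ≤ ·) C ∧
    ∀ C', C' ⊆ V → IsChain (· ≤ ·) C' → C ⊆ C' → C' = C

/-- Every maximal chain of `P_{k,n}` has exactly `k + n` elements (so the rank
of `P_{k,n}`, the common length of its maximal chains, is `k + n - 1`). -/
theorem Pkn_maxChain_card (k n : ℕ) (hkn : k < n) (C : Set (ℕ × ℕ))
    (hC : IsMaxChainIn (Pkn k n) C) : C.ncard = k + n := by
  obtain ⟨hCV, hCchain, hmax⟩ := hC
  -- the rank function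
  set f : ℕ × ℕ → ℕ := fun q => q.1 + q.2 with hf
  have hmono : ∀ x y : ℕ × ℕ, x ≤ y → f x = f y → x = y := by
    rintro ⟨a, b⟩ ⟨c, d⟩ ⟨h1, h2⟩ h3
    simp only [hf, Prod.mk.injEq] at *
    omega
  -- C is finite
  have hfin : C.Finite := by
    apply Set.Finite.subset ((Set.finite_Iic k).prod (Set.finite_Iic n))
    intro x hx
    obtain ⟨h1, h2, h3⟩ := hCV hx
    exact ⟨h1, h3⟩
  -- inserting elements comparable to everything
  have hins : ∀ c ∈ Pkn k n, (∀ x ∈ C, c ≤ x ∨ x ≤ c) → c ∈ C := by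
    intro c hc hcomp
    have h := hmax (insert c C) (Set.insert_subset hc hCV)
      (hCchain.insert fun x hx _ => hcomp x hx) (Set.subset_insert _ _)
    rw [← h]
    exact Set.mem_insert _ _
  have h01 : ((0, 1) : ℕ × ℕ) ∈ C := by
    refine hins (0, 1) ⟨by omega, by omega, by omega⟩ fun x hx => ?_
    obtain ⟨h1, h2, h3⟩ := hCV hx
    exact Or.inl ⟨by omega, by omega⟩
  have hkn' : ((k, n) : ℕ × ℕ) ∈ C := by
    refine hins (k, n) ⟨le_rfl, hkn, le_rfl⟩ fun x hx => ?_
    obtain ⟨h1, h2, h3⟩ := hCV hx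
    exact Or.inr ⟨h1, h3⟩
  -- every value 1..k+n is attained by f on C
  have hsurj : ∀ v, 1 ≤ v → v ≤ k + n → ∃ x ∈ C, f x = v := by
    intro v hv1 hv2
    by_contra hno
    push_neg at hno
    have hv1' : 1 < v := by
      rcases eq_or_lt_of_le hv1 with h | h
      · exact absurd (by simp [hf, ← h]) (hno (0, 1) h01)
      · exact h
    have hv2' : v < k + n := by
      rcases eq_or_lt_of_le hv2 with h | h
      · exact absurd (by simp [hf, h]) (hno (k, n) hkn')
      · exact h
    -- the greatest element below v
    obtain ⟨a, ⟨haC, hafv⟩, hamax⟩ :=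
      Set.Finite.exists_maximalFor f {x ∈ C | f x < v}
        (hfin.subset (Set.sep_subset _ _)) ⟨(0, 1), h01, by simpa [hf] using hv1'⟩
    have hamax' : ∀ x ∈ C, f x < v → x ≤ a := by
      intro x hx hfx
      rcases eq_or_ne x a with rfl | hne
      · exact le_rfl
      rcases hCchain hx haC hne with h | h
      · exact h
      · exact le_of_eq (hmono a x h (le_antisymm (Nat.add_le_add h.1 h.2) (hamax ⟨hx, hfx⟩ (Nat.add_le_add h.1 h.2)))).symm
    -- the least element above v
    obtain ⟨b, ⟨hbC, hbfv⟩, hbmin⟩ :=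
      Set.Finite.exists_minimalFor f {x ∈ C | v < f x}
        (hfin.subset (Set.sep_subset _ _)) ⟨(k, n), hkn', by simpa [hf] using hv2'⟩
    have hbmin' : ∀ x ∈ C, v < f x → b ≤ x := by
      intro x hx hfx
      rcases eq_or_ne x b with rfl | hne
      · exact le_rfl
      rcases hCchain hx hbC hne with h | h
      · have := (le_antisymm (Nat.add_le_add h.1 h.2) (hbmin ⟨hx, hfx⟩ (Nat.add_le_add h.1 h.2))).symm
        exact (hmono x b h this.symm) ▸ le_rfl
      · exact h
    have hab : a ≤ b := by
      rcases eq_or_ne a b with rfl | hne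
      · exact le_rfl
      rcases hCchain haC hbC hne with h | h
      · exact h
      · exact absurd (Nat.add_le_add h.1 h.2) (by simp [hf] at hafv hbfv ⊢; omega)
    obtain ⟨l, m⟩ := a
    obtain ⟨l', m'⟩ := b
    obtain ⟨hl1, hl2, hl3⟩ := hCV haC
    obtain ⟨hr1, hr2, hr3⟩ := hCV hbC
    simp only [hf] at hafv hbfv
    obtain ⟨hab1, hab2⟩ := hab
    simp only at hab1 hab2 hl1 hl2 hl3 hr1 hr2 hr3 hafv hbfv
    -- construct the new element c
    set c : ℕ × ℕ := if v ≤ l + m' then (l, v - l) else (v - m', m') with hc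
    have hcP : c ∈ Pkn k n := by
      rw [hc]; split <;> exact ⟨by omega, by omega, by omega⟩
    have hac : (l, m) ≤ c := by
      rw [hc]; split <;> exact ⟨by omega, by omega⟩
    have hcb : c ≤ (l', m') := by
      rw [hc]; split <;> exact ⟨by omega, by omega⟩
    have hfc : f c = v := by
      rw [hc]; split <;> simp [hf] <;> omega
    have hcC : c ∈ C := by
      refine hins c hcP fun x hx => ?_
      rcases lt_or_gt_of_ne (fun h : f x = v => hno x hx h) with h | h
      · exact Or.inr (le_trans (hamax' x hx h) hac)
      · exact Or.inl (le_trans hcb (hbmin' x hx h))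
    exact hno c hcC hfc
  -- the image of C under f is exactly Icc 1 (k+n)
  have himg : f '' C = Set.Icc 1 (k + n) := by
    ext v
    constructor
    · rintro ⟨x, hx, rfl⟩
      obtain ⟨h1, h2, h3⟩ := hCV hx
      exact ⟨by simp [hf]; omega, by simp [hf]; omega⟩
    · rintro ⟨h1, h2⟩
      obtain ⟨x, hx, hfx⟩ := hsurj v h1 h2
      exact ⟨x, hx, hfx⟩
  have hinj : Set.InjOn f C := by
    intro x hx y hy hxy
    rcases eq_or_ne x y with rfl | hne
    · rfl
    rcases hCchain hx hy hne with h | h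
    · exact hmono x y h hxy
    · exact (hmono y x h hxy.symm).symm
  calc C.ncard = (f '' C).ncard := (Set.ncard_image_of_injOn hinj).symm
    _ = (Set.Icc 1 (k + n)).ncard := by rw [himg]
    _ = k + n := by
        rw [← Finset.coe_Icc, Set.ncard_coe_finset, Nat.card_Icc]
        omega
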